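/- For n not divisible by 4, the generating function α_O of Oₙ satisfies: for every nonzero x ∈ (Z₂)ⁿ there exists y ∈ (Z₂)ⁿ with β(x,y) = 1, where β(x,y) = α_O(x+y) + α_O(x) + α_O(y). Consequently the twisted group algebra Oₙ has trivial center. -/

import Mathlib

/-- Hamming weight of x ∈ (Z₂)ⁿ. -/
def wt {n : ℕ} (x : Fin n → ZMod 2) : ℕ :=
  (Finset.univ.filter (fun i => x i = 1)).card


/-- standard basis vector -/
def eV {n : ℕ} (i : Fin n) : Fin n → ZMod 2 := Pi.single i 1

lemma eV_same {n : ℕ} (i : Fin n) : eV i i = 1 := Pi.single_eq_same i 1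

lemma eV_ne {n : ℕ} {i j : Fin n} (h : j ≠ i) : eV i j = 0 := Pi.single_eq_of_ne h 1

lemma wt_add_single_one {n : ℕ} (x : Fin n → ZMod 2) (i : Fin n) (h : x i = 1) :
    wt (x + eV i) + 1 = wt x := by
  unfold wt
  have hset : Finset.univ.filter (fun j => (x + eV i) j = 1)
      = (Finset.univ.filter (fun j => x j = 1)).erase i := by
    ext j
    by_cases hj : j = i
    · subst hj
      rw [Finset.mem_filter]; simp [eV, h, Pi.single_eq_same]
    · rw [Finset.mem_filter]; simp [eV, hj, Pi.single_eq_of_ne hj]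
  rw [hset, Finset.card_erase_add_one (by simp [h])]

lemma wt_add_single_zero {n : ℕ} (x : Fin n → ZMod 2) (i : Fin n) (h : x i = 0) :
    wt (x + eV i) = wt x + 1 := by
  unfold wt
  have hset : Finset.univ.filter (fun j => (x + eV i) j = 1)
      = insert i (Finset.univ.filter (fun j => x j = 1)) := by
    ext j
    by_cases hj : j = i
    · subst hj
      rw [Finset.mem_filter]; simp [eV, h, Pi.single_eq_same]
    · rw [Finset.mem_filter]; simp [eV, hj, Pi.single_eq_of_ne hj]
  rw [hset, Finset.card_insert_of_notMem (by simp [h])]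

lemma wt_single_one {n : ℕ} (i : Fin n) : wt (eV i) = 1 := by
  unfold wt
  have hset : Finset.univ.filter (fun j => (eV i) j = 1)
      = {i} := by
    ext j
    by_cases hj : j = i
    · subst hj; rw [Finset.mem_filter]; simp [eV, Pi.single_eq_same]
    · rw [Finset.mem_filter]; simp [eV, hj, Pi.single_eq_of_ne hj]
  rw [hset, Finset.card_singleton]

lemma wt_double_one {n : ℕ} (i j : Fin n) (hij : i ≠ j) :
    wt (eV i + eV j) = 2 := by
  unfold wt
  have hset : Finset.univ.filter
      (fun k => (eV i + eV j) k = 1) = {i, j} := by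
    ext k
    by_cases hk : k = i
    · subst hk; rw [Finset.mem_filter]; simp [eV, Pi.single_eq_same, Pi.single_eq_of_ne hij]
    · by_cases hk' : k = j
      · subst hk'; rw [Finset.mem_filter]; simp [eV, Pi.single_eq_same, Pi.single_eq_of_ne hij, hk]
      · rw [Finset.mem_filter]; simp [eV, hk, hk', Pi.single_eq_of_ne hk, Pi.single_eq_of_ne hk']
  rw [hset, Finset.card_pair hij]

/-- For n not divisible by 4 (n ≥ 2), every nonzero homogeneous element of Oₙ
    anticommutes with some homogeneous element: for every x ≠ 0 there is y with
    β(x,y) = 1, where β is the polarization of the generating function α_O. -/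
theorem stmt_12 (n : ℕ) (hn : 2 ≤ n) (h4 : n % 4 ≠ 0)
    (α : (Fin n → ZMod 2) → ZMod 2)
    (hα : ∀ x, α x = if wt x % 4 = 0 then 0 else 1) :
    ∀ x : Fin n → ZMod 2, x ≠ 0 →
      ∃ y : Fin n → ZMod 2, α (x + y) + α x + α y = 1 := by
  have hzo : ∀ a : ZMod 2, a ≠ 1 → a = 0 := by decide
  have hoz : ∀ a : ZMod 2, a ≠ 0 → a = 1 := by decide
  intro x hx
  obtain ⟨i, hi⟩ : ∃ i, x i = 1 := by
    by_contra h
    push_neg at h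
    exact hx (funext fun j => hzo _ (h j))
  by_cases hz : ∃ j, x j = 0
  · -- swap a 1 and a 0: weight unchanged, wt y = 2
    obtain ⟨j, hj⟩ := hz
    have hij : i ≠ j := by
      rintro rfl
      rw [hi] at hj
      exact absurd hj (by decide)
    refine ⟨eV i + eV j, ?_⟩
    have h1 : wt (x + eV i) + 1 = wt x := wt_add_single_one x i hi
    have hj' : (x + eV i) j = 0 := by
      simp [eV, Pi.single_eq_of_ne hij.symm, hj]
    have h2 : wt (x + eV i + eV j) = wt (x + eV i) + 1 :=
      wt_add_single_zero _ j hj'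
    have hwxy : wt (x + (eV i + eV j)) = wt x := by
      rw [← add_assoc, h2, h1]
    have hwy : wt (eV i + eV j) = 2 :=
      wt_double_one i j hij
    rw [hα, hα, hα, hwxy, hwy]
    by_cases h0 : wt x % 4 = 0 <;> simp [h0] <;> decide
  · -- x is all ones, wt x = n
    push_neg at hz
    have hall : ∀ j, x j = 1 := fun j => hoz _ (hz j)
    have hw : wt x = n := by
      unfold wt
      rw [Finset.filter_true_of_mem (fun j _ => hall j), Finset.card_univ, Fintype.card_fin]
    have hmod : n % 4 = 1 ∨ n % 4 = 2 ∨ n % 4 = 3 := by omega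
    rcases hmod with h1 | h23
    · -- remove two ones
      obtain ⟨j, hij⟩ : ∃ j : Fin n, i ≠ j := by
        by_contra h
        push_neg at h
        have : Fintype.card (Fin n) ≤ 1 := Fintype.card_le_one_iff.2 (fun a b => (h a).symm.trans (h b))
        simp at this
        omega
      refine ⟨eV i + eV j, ?_⟩
      have ha : wt (x + eV i) + 1 = wt x := wt_add_single_one x i hi
      have hj' : (x + eV i) j = 1 := by
        simp [eV, Pi.single_eq_of_ne hij.symm, hall j]
      have hb : wt (x + eV i + eV j) + 1 = wt (x + eV i) :=
        wt_add_single_one _ j hj'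
      have hwxy : wt (x + (eV i + eV j)) + 2 = n := by
        rw [← add_assoc]
        omega
      have hwy : wt (eV i + eV j) = 2 :=
        wt_double_one i j hij
      rw [hα, hα, hα, hwy, hw]
      have e1 : wt (x + (eV i + eV j)) % 4 = 3 := by omega
      rw [if_neg (by omega), if_neg (by omega), if_neg (by norm_num)]
      decide
    · -- n % 4 = 2 or 3 : remove one
      refine ⟨eV i, ?_⟩
      have ha : wt (x + eV i) + 1 = wt x := wt_add_single_one x i hi
      have hwy : wt (eV i) = 1 := wt_single_one i
      rw [hα, hα, hα, hwy, hw]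
      rw [if_neg (by omega), if_neg (by omega), if_neg (by norm_num)]
      decide
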